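/- For the model knot complex C(T(3,4)), Υ²_{C(T(3,4)), 2/3}(s) = −2s for all s ∈ [0,2]. -/

import Mathlib

open scoped BigOperators

/-- A "pre-complex": a finite distinguished basis `B`, a grading `gr`,
bifiltration functions `alg` and `alex`, and a differential recorded by its
matrix `d` over the field `F₂ = ZMod 2`:  `∂ x = ∑ y, d x y • y`. -/
structure PreComplex where
  B : Type
  fB : Fintype B
  dB : DecidableEq B
  gr : B → ℤ
  alg : B → ℤ
  alex : B → ℤ
  d : B → B → ZMod 2

attribute [instance] PreComplex.fB PreComplex.dB

namespace PreComplex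

variable (C : PreComplex)

/-- Chains: F₂-linear combinations of basis elements. -/
abbrev Chain : Type := C.B → ZMod 2

/-- The boundary of a chain, extending `∂ x = ∑ y, d x y • y` linearly. -/
def bdry (c : C.Chain) : C.Chain := fun y => ∑ x, c x * C.d x y

/-- A chain is homogeneous of grading `k`. -/
def isGraded (c : C.Chain) (k : ℤ) : Prop := ∀ x, c x ≠ 0 → C.gr x = k

def isCycle (c : C.Chain) : Prop := C.bdry c = 0

def isBoundary (c : C.Chain) : Prop := ∃ w : C.Chain, C.bdry w = c

/-- A cycle of grading 0 representing the nonzero class of `H₀(C)`. -/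
def GenCycle (z : C.Chain) : Prop :=
  C.isCycle z ∧ C.isGraded z 0 ∧ ¬ C.isBoundary z

/-- The bifiltration level of a basis element. -/
def lev (x : C.B) : ℤ × ℤ := (C.alg x, C.alex x)

/-- A model knot complex: `∂ ∘ ∂ = 0`; `∂` drops the grading by one and does
not increase either filtration; the homology is one dimensional, concentrated
in grading 0; and the minimum over cycles representing the generator of
`H₀(C)` of their maximal `alg` (resp. `alex`) filtration level is 0. -/
def IsModel : Prop :=
  (∀ x z, (∑ y, C.d x y * C.d y z) = 0) ∧
  (∀ x y, C.d x y ≠ 0 → C.gr y = C.gr x - 1 ∧ C.alg y ≤ C.alg x ∧ C.alex y ≤ C.alex x) ∧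
  (∀ k : ℤ, k ≠ 0 → ∀ z : C.Chain, C.isCycle z → C.isGraded z k → C.isBoundary z) ∧
  (∃ z : C.Chain, C.GenCycle z) ∧
  (∀ z z' : C.Chain, C.GenCycle z → C.GenCycle z' → C.isBoundary (z + z')) ∧
  (∃ z : C.Chain, C.GenCycle z ∧ ∀ x, z x ≠ 0 → C.alg x ≤ 0) ∧
  (∀ z : C.Chain, C.GenCycle z → ∃ x, z x ≠ 0 ∧ 0 ≤ C.alg x) ∧
  (∃ z : C.Chain, C.GenCycle z ∧ ∀ x, z x ≠ 0 → C.alex x ≤ 0) ∧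
  (∀ z : C.Chain, C.GenCycle z → ∃ x, z x ≠ 0 ∧ 0 ≤ C.alex x)

/-- An acyclic complex: conditions (i) and (ii) hold but the homology vanishes. -/
def IsAcyclic : Prop :=
  (∀ x z, (∑ y, C.d x y * C.d y z) = 0) ∧
  (∀ x y, C.d x y ≠ 0 → C.gr y = C.gr x - 1 ∧ C.alg y ≤ C.alg x ∧ C.alex y ≤ C.alex x) ∧
  (∀ z : C.Chain, C.isCycle z → C.isBoundary z)

end PreComplex

/-- `f_t(i,j) = (t/2)·j + (1 − t/2)·i`. -/
noncomputable def fval (t : ℝ) (p : ℤ × ℤ) : ℝ :=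
  (t / 2) * (p.2 : ℝ) + (1 - t / 2) * (p.1 : ℝ)

namespace PreComplex

variable (C : PreComplex)

/-- A chain lies in the subcomplex `F_{t,s}`. -/
def inF (t s : ℝ) (c : C.Chain) : Prop :=
  ∀ x, c x ≠ 0 → fval t (C.lev x) ≤ s

/-- `γ_C(t)`: the minimal `s` such that `H₀(F_{t,s}) → H₀(C)` is surjective,
i.e. such that `F_{t,s}` contains a cycle representing the generator. -/
noncomputable def gamma (t : ℝ) : ℝ :=
  sInf {s : ℝ | ∃ z : C.Chain, C.GenCycle z ∧ C.inF t s z}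

/-- The Upsilon invariant `Υ_C(t) = −2 γ_C(t)`. -/
noncomputable def Upsilon (t : ℝ) : ℝ := -2 * C.gamma t

/-- `P`: the set of bifiltration levels of basis elements. -/
def PSet : Set (ℤ × ℤ) := Set.range C.lev

/-- `P_u = { p ∈ P : f_u(p) = γ_C(u) }`. -/
def Pt (u : ℝ) : Set (ℤ × ℤ) := {p ∈ C.PSet | fval u p = C.gamma u}

/-- `p` is the negative pivot point of `C` at `t`. -/
def IsNegPivot (t : ℝ) (p : ℤ × ℤ) : Prop :=
  ∃ δ₀ > (0 : ℝ), ∀ δ : ℝ, 0 < δ → δ < δ₀ → C.Pt (t - δ) ∩ C.Pt t = {p}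

/-- `p` is the positive pivot point of `C` at `t`. -/
def IsPosPivot (t : ℝ) (p : ℤ × ℤ) : Prop :=
  ∃ δ₀ > (0 : ℝ), ∀ δ : ℝ, 0 < δ → δ < δ₀ → C.Pt (t + δ) ∩ C.Pt t = {p}

/-- Cycles in `F_{t−δ, γ_C(t−δ)}` representing the nonzero class of `H₀(C)`. -/
def ZminusAt (t δ : ℝ) : Set C.Chain :=
  {z | C.GenCycle z ∧ C.inF (t - δ) (C.gamma (t - δ)) z}

/-- Cycles in `F_{t+δ, γ_C(t+δ)}` representing the nonzero class of `H₀(C)`. -/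
def ZplusAt (t δ : ℝ) : Set C.Chain :=
  {z | C.GenCycle z ∧ C.inF (t + δ) (C.gamma (t + δ)) z}

/-- `Z⁻`: the (eventual, for all sufficiently small `δ > 0`) set of cycles in
`F_{t−δ, γ_C(t−δ)}` representing the nonzero class of `H₀(C)`. -/
def Zminus (t : ℝ) : Set C.Chain :=
  {z | ∃ δ₀ > (0 : ℝ), ∀ δ : ℝ, 0 < δ → δ < δ₀ → z ∈ C.ZminusAt t δ}

/-- `Z⁺`: the (eventual, for all sufficiently small `δ > 0`) set of cycles in
`F_{t+δ, γ_C(t+δ)}` representing the nonzero class of `H₀(C)`. -/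
def Zplus (t : ℝ) : Set C.Chain :=
  {z | ∃ δ₀ > (0 : ℝ), ∀ δ : ℝ, 0 < δ → δ < δ₀ → z ∈ C.ZplusAt t δ}

/-- A basis element lies in the subcomplex `F_{t,γ_C(t)} + F_{s,r}`. -/
def inRegion (t s r : ℝ) (x : C.B) : Prop :=
  fval t (C.lev x) ≤ C.gamma t ∨ fval s (C.lev x) ≤ r

/-- `z` and `z'` represent the same homology class in `H₀(F_{t,γ_C(t)} + F_{s,r})`
(over F₂ the difference `z − z'` is `z + z'`). -/
def sameClass (t s r : ℝ) (z z' : C.Chain) : Prop :=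
  (∀ x, z x ≠ 0 → C.inRegion t s r x) ∧
  (∀ x, z' x ≠ 0 → C.inRegion t s r x) ∧
  ∃ w : C.Chain, (∀ x, w x ≠ 0 → C.inRegion t s r x) ∧ C.bdry w = z + z'

/-- The set of `r` for which some `z⁻ ∈ Z⁻` and `z⁺ ∈ Z⁺` represent the same
class in `H₀(F_{t,γ_C(t)} + F_{s,r})`. -/
def gamma2Set (t s : ℝ) : Set ℝ :=
  {r | ∃ zm ∈ C.Zminus t, ∃ zp ∈ C.Zplus t, C.sameClass t s r zm zp}

/-- `γ²_{C,t}(s)`, as an extended real: the minimum of `gamma2Set`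
(`−∞` if the condition holds for every `r`). -/
noncomputable def gamma2 (t s : ℝ) : EReal :=
  sInf ((fun r : ℝ => (r : EReal)) '' C.gamma2Set t s)

/-- `Υ²_{C,t}(s) = −2 (γ²_{C,t}(s) − γ_C(t))`. -/
noncomputable def Upsilon2 (t s : ℝ) : EReal :=
  (-2 : EReal) * (C.gamma2 t s - (C.gamma t : EReal))

end PreComplex

/-- The jump of the derivative of `f` at `t`: the right-hand derivative minus
the left-hand derivative. -/
noncomputable def derivJump (f : ℝ → ℝ) (t : ℝ) : ℝ :=
  derivWithin f (Set.Ici t) t - derivWithin f (Set.Iic t) t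

/-- Direct sum of two pre-complexes. -/
def PreComplex.dsum (C A : PreComplex) : PreComplex where
  B := C.B ⊕ A.B
  fB := inferInstance
  dB := inferInstance
  gr := Sum.elim C.gr A.gr
  alg := Sum.elim C.alg A.alg
  alex := Sum.elim C.alex A.alex
  d := fun x y =>
    match x, y with
    | Sum.inl x, Sum.inl y => C.d x y
    | Sum.inr x, Sum.inr y => A.d x y
    | _, _ => 0

/-- Tensor product of two pre-complexes. -/
def PreComplex.tensor (C₁ C₂ : PreComplex) : PreComplex where
  B := C₁.B × C₂.B
  fB := inferInstance
  dB := inferInstance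
  gr := fun x => C₁.gr x.1 + C₂.gr x.2
  alg := fun x => C₁.alg x.1 + C₂.alg x.2
  alex := fun x => C₁.alex x.1 + C₂.alex x.2
  d := fun x y =>
    (if x.2 = y.2 then C₁.d x.1 y.1 else 0) + (if x.1 = y.1 then C₂.d x.2 y.2 else 0)

/-- An isomorphism of pre-complexes: a bijection of the distinguished bases
preserving `gr`, `alg`, `alex`, whose linear extension commutes with the
differentials. -/
def PreComplex.Iso (C₁ C₂ : PreComplex) : Prop :=
  ∃ e : C₁.B ≃ C₂.B,
    (∀ x, C₂.gr (e x) = C₁.gr x) ∧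
    (∀ x, C₂.alg (e x) = C₁.alg x) ∧
    (∀ x, C₂.alex (e x) = C₁.alex x) ∧
    (∀ x y, C₂.d (e x) (e y) = C₁.d x y)

/-- Stable equivalence of pre-complexes: isomorphism after adding acyclic
summands. -/
def PreComplex.StablyEquiv (C₁ C₂ : PreComplex) : Prop :=
  ∃ A₁ A₂ : PreComplex, A₁.IsAcyclic ∧ A₂.IsAcyclic ∧ (C₁.dsum A₁).Iso (C₂.dsum A₂)

/-- The staircase model complex `CFK∞(T(3,4))`: generators `a₁,a₂,a₃` of
grading 0 at levels (0,3), (1,1), (3,0) and `b₁,b₂` of grading 1 at levels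
(1,3), (3,1), with `∂b₁ = a₁ + a₂` and `∂b₂ = a₂ + a₃`. -/
def T34 : PreComplex where
  B := Fin 5
  fB := inferInstance
  dB := inferInstance
  gr := ![0, 0, 0, 1, 1]
  alg := ![0, 1, 3, 1, 3]
  alex := ![3, 1, 0, 3, 1]
  d := fun x y =>
    if (x.val = 3 ∧ (y.val = 0 ∨ y.val = 1)) ∨ (x.val = 4 ∧ (y.val = 1 ∨ y.val = 2))
    then 1 else 0

namespace T34aux

instance (n : ℕ) : OfNat T34.B n := inferInstanceAs (OfNat (Fin 5) n)

lemma cases5 (x : T34.B) : x = 0 ∨ x = 1 ∨ x = 2 ∨ x = 3 ∨ x = 4 :=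
  (by decide : ∀ y : Fin 5, y = 0 ∨ y = 1 ∨ y = 2 ∨ y = 3 ∨ y = 4) x

lemma zne1 : ∀ a : ZMod 2, a ≠ 0 → a = 1 := by decide
lemma znot1 : ∀ a : ZMod 2, a ≠ 1 → a = 0 := by decide
lemma zmid : ∀ a b c : ZMod 2, a + b + c = 0 → b = a + c := by decide
lemma zs1 : ∀ a b : ZMod 2, a + (a + b) + b ≠ 1 := by decide

lemma val3 : ((3 : Fin 5) : ℕ) = 3 := rfl
lemma val4 : ((4 : Fin 5) : ℕ) = 4 := rfl

lemma bdry_eq (c : Fin 5 → ZMod 2) :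
    T34.bdry c = ![c 3, c 3 + c 4, c 4, 0, 0] := by
  funext y
  fin_cases y <;>
    simp [PreComplex.bdry, T34, Fin.sum_univ_five, val3, val4] <;>
    erw [Fin.sum_univ_five] <;> simp [val3, val4] <;> rfl

lemma fv0 (t : ℝ) : fval t (T34.lev (0 : T34.B)) = 3 * t / 2 := by
  show fval t (0, 3) = _ ; norm_num [fval]; ring
lemma fv1 (t : ℝ) : fval t (T34.lev (1 : T34.B)) = 1 := by
  show fval t (1, 1) = _ ; norm_num [fval]
lemma fv2 (t : ℝ) : fval t (T34.lev (2 : T34.B)) = 3 - 3 * t / 2 := by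
  show fval t (3, 0) = _ ; norm_num [fval]; ring
lemma fv3 (t : ℝ) : fval t (T34.lev (3 : T34.B)) = 1 + t := by
  show fval t (1, 3) = _ ; norm_num [fval]; ring

def e0 : T34.Chain := ![1,0,0,0,0]
def e1 : T34.Chain := ![0,1,0,0,0]
def e3 : T34.Chain := ![0,0,0,1,0]

lemma genCycle_iff (z : T34.Chain) :
    T34.GenCycle z ↔ z 3 = 0 ∧ z 4 = 0 ∧ z 0 + z 1 + z 2 = 1 := by
  constructor
  · rintro ⟨hc, _, hb⟩
    rw [PreComplex.isCycle] at hc; erw [bdry_eq] at hc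
    have h3 : z 3 = 0 := by exact congrFun hc 0
    have h4 : z 4 = 0 := by exact congrFun hc 2
    refine ⟨h3, h4, ?_⟩
    by_contra hsum
    have hsum0 : z 0 + z 1 + z 2 = 0 := znot1 _ hsum
    apply hb
    refine ⟨![0, 0, 0, z 0, z 2], ?_⟩
    erw [bdry_eq]
    have h1 : z 1 = z 0 + z 2 := zmid _ _ _ hsum0
    funext y
    rcases cases5 y with rfl | rfl | rfl | rfl | rfl <;>
      simp [h3, h4, ← h1]
  · rintro ⟨h3, h4, hsum⟩
    refine ⟨?_, ?_, ?_⟩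
    · rw [PreComplex.isCycle]; erw [bdry_eq]
      funext y
      rcases cases5 y with rfl | rfl | rfl | rfl | rfl <;> simp [h3, h4, show z (3 : Fin 5) = 0 from h3, show z (4 : Fin 5) = 0 from h4]
    · intro x hx
      rcases cases5 x with rfl | rfl | rfl | rfl | rfl
      · rfl
      · rfl
      · rfl
      · exact absurd h3 hx
      · exact absurd h4 hx
    · rintro ⟨w, hw⟩
      erw [bdry_eq] at hw
      have ew0 : z 0 = w 3 := by exact (congrFun hw 0).symm
      have ew1 : z 1 = w 3 + w 4 := by exact (congrFun hw 1).symm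
      have ew2 : z 2 = w 4 := by exact (congrFun hw 2).symm
      rw [ew0, ew1, ew2] at hsum
      exact zs1 _ _ hsum

lemma gen_e0 : T34.GenCycle e0 := by rw [genCycle_iff]; refine ⟨rfl, rfl, rfl⟩
lemma gen_e1 : T34.GenCycle e1 := by rw [genCycle_iff]; refine ⟨rfl, rfl, rfl⟩

lemma supp_e0 (x : T34.B) (hx : e0 x ≠ 0) : x = 0 := by
  rcases cases5 x with rfl | rfl | rfl | rfl | rfl
  · rfl
  all_goals exact absurd rfl hx
lemma supp_e1 (x : T34.B) (hx : e1 x ≠ 0) : x = 1 := by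
  rcases cases5 x with rfl | rfl | rfl | rfl | rfl
  · exact absurd rfl hx
  · rfl
  all_goals exact absurd rfl hx
lemma supp_e3 (x : T34.B) (hx : e3 x ≠ 0) : x = 3 := by
  rcases cases5 x with rfl | rfl | rfl | rfl | rfl
  · exact absurd rfl hx
  · exact absurd rfl hx
  · exact absurd rfl hx
  · rfl
  · exact absurd rfl hx

lemma gamma_left {t : ℝ} (h2 : t ≤ 2 / 3) : T34.gamma t = 3 * t / 2 := by
  refine IsLeast.csInf_eq ⟨⟨e0, gen_e0, ?_⟩, ?_⟩
  · intro x hx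
    rw [supp_e0 x hx, fv0]
  · rintro s ⟨z, hz, hin⟩
    rw [genCycle_iff] at hz
    obtain ⟨h3, h4, hsum⟩ := hz
    by_cases h0 : z 0 ≠ 0
    · have := hin 0 h0; rw [fv0] at this; linarith
    by_cases h1 : z 1 ≠ 0
    · have := hin 1 h1; rw [fv1] at this; linarith
    by_cases hh2 : z 2 ≠ 0
    · have := hin 2 hh2; rw [fv2] at this; linarith
    · push_neg at h0 h1 hh2
      rw [h0, h1, hh2] at hsum; simp at hsum

lemma gamma_right {t : ℝ} (h1 : 2 / 3 ≤ t) (h2 : t < 4 / 3) : T34.gamma t = 1 := by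
  refine IsLeast.csInf_eq ⟨⟨e1, gen_e1, ?_⟩, ?_⟩
  · intro x hx
    rw [supp_e1 x hx, fv1]
  · rintro s ⟨z, hz, hin⟩
    rw [genCycle_iff] at hz
    obtain ⟨h3, h4, hsum⟩ := hz
    by_cases h0 : z 0 ≠ 0
    · have := hin 0 h0; rw [fv0] at this; linarith
    by_cases hh1 : z 1 ≠ 0
    · have := hin 1 hh1; rw [fv1] at this; linarith
    by_cases hh2 : z 2 ≠ 0
    · have := hin 2 hh2; rw [fv2] at this; linarith
    · push_neg at h0 hh1 hh2
      rw [h0, hh1, hh2] at hsum; simp at hsum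

lemma gamma_23 : T34.gamma (2 / 3) = 1 := gamma_right le_rfl (by norm_num)

lemma zminus_eq : T34.Zminus (2 / 3) = {e0} := by
  ext z
  simp only [Set.mem_singleton_iff]
  constructor
  · rintro ⟨δ₀, hδ₀, h⟩
    set δ : ℝ := min (δ₀ / 2) (1 / 6) with hδdef
    have hδpos : 0 < δ := lt_min (by linarith) (by norm_num)
    have hδlt : δ < δ₀ := lt_of_le_of_lt (min_le_left _ _) (by linarith)
    have hδsmall : δ ≤ 1 / 6 := min_le_right _ _
    obtain ⟨hgen, hin⟩ := h δ hδpos hδlt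
    have hγ : T34.gamma (2 / 3 - δ) = 3 * (2 / 3 - δ) / 2 :=
      gamma_left (by linarith)
    rw [hγ] at hin
    rw [genCycle_iff] at hgen
    obtain ⟨h3, h4, hsum⟩ := hgen
    have h1 : z 1 = 0 := by
      by_contra h1
      have := hin 1 h1; rw [fv1] at this; linarith
    have hz2 : z 2 = 0 := by
      by_contra hc
      have := hin 2 hc; rw [fv2] at this; linarith
    have h0 : z 0 = 1 := by
      rw [h1, hz2] at hsum; simpa using hsum
    funext x
    rcases cases5 x with rfl | rfl | rfl | rfl | rfl
    · rw [h0]; rfl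
    · rw [h1]; rfl
    · rw [hz2]; rfl
    · rw [h3]; rfl
    · rw [h4]; rfl
  · rintro rfl
    refine ⟨1 / 3, by norm_num, fun δ hδ hδ' => ⟨gen_e0, ?_⟩⟩
    have hγ : T34.gamma (2 / 3 - δ) = 3 * (2 / 3 - δ) / 2 :=
      gamma_left (by linarith)
    rw [hγ]
    intro x hx
    rw [supp_e0 x hx, fv0]

lemma zplus_eq : T34.Zplus (2 / 3) = {e1} := by
  ext z
  simp only [Set.mem_singleton_iff]
  constructor
  · rintro ⟨δ₀, hδ₀, h⟩
    set δ : ℝ := min (δ₀ / 2) (1 / 6) with hδdef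
    have hδpos : 0 < δ := lt_min (by linarith) (by norm_num)
    have hδlt : δ < δ₀ := lt_of_le_of_lt (min_le_left _ _) (by linarith)
    have hδsmall : δ ≤ 1 / 6 := min_le_right _ _
    obtain ⟨hgen, hin⟩ := h δ hδpos hδlt
    have hγ : T34.gamma (2 / 3 + δ) = 1 :=
      gamma_right (by linarith) (by linarith)
    rw [hγ] at hin
    rw [genCycle_iff] at hgen
    obtain ⟨h3, h4, hsum⟩ := hgen
    have h0 : z 0 = 0 := by
      by_contra hc
      have := hin 0 hc; rw [fv0] at this; linarith
    have hz2 : z 2 = 0 := by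
      by_contra hc
      have := hin 2 hc; rw [fv2] at this; linarith
    have h1 : z 1 = 1 := by
      rw [h0, hz2] at hsum; simpa using hsum
    funext x
    rcases cases5 x with rfl | rfl | rfl | rfl | rfl
    · rw [h0]; rfl
    · rw [h1]; rfl
    · rw [hz2]; rfl
    · rw [h3]; rfl
    · rw [h4]; rfl
  · rintro rfl
    refine ⟨1 / 3, by norm_num, fun δ hδ hδ' => ⟨gen_e1, ?_⟩⟩
    have hγ : T34.gamma (2 / 3 + δ) = 1 :=
      gamma_right (by linarith) (by linarith)
    rw [hγ]
    intro x hx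
    rw [supp_e1 x hx, fv1]

lemma bdry_e3 : T34.bdry e3 = e0 + e1 := by
  erw [bdry_eq]
  funext y
  rcases cases5 y with rfl | rfl | rfl | rfl | rfl <;> rfl

lemma gamma2Set_eq (s : ℝ) : T34.gamma2Set (2 / 3) s = Set.Ici (s + 1) := by
  ext r
  constructor
  · rintro ⟨zm, hzm, zp, hzp, hm, hp, w, hw, hbw⟩
    rw [zminus_eq, Set.mem_singleton_iff] at hzm
    rw [zplus_eq, Set.mem_singleton_iff] at hzp
    subst hzm; subst hzp
    erw [bdry_eq] at hbw
    have hw3 : w 3 = 1 := by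
      have := congrFun hbw 0
      exact this
    have hreg := hw 3 (by rw [hw3]; exact one_ne_zero)
    rcases hreg with hL | hR
    · rw [fv3, gamma_23] at hL; norm_num at hL
    · rw [fv3] at hR
      rw [Set.mem_Ici]; linarith
  · intro hr
    rw [Set.mem_Ici] at hr
    refine ⟨e0, by rw [zminus_eq]; rfl, e1, by rw [zplus_eq]; rfl, ?_, ?_, e3, ?_, bdry_e3⟩
    · intro x hx
      left; rw [supp_e0 x hx, fv0, gamma_23]; norm_num
    · intro x hx
      left; rw [supp_e1 x hx, fv1, gamma_23]
    · intro x hx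
      right; rw [supp_e3 x hx, fv3]; linarith

lemma gamma2_eq (s : ℝ) : T34.gamma2 (2 / 3) s = ((s + 1 : ℝ) : EReal) := by
  rw [PreComplex.gamma2, gamma2Set_eq]
  refine le_antisymm (sInf_le ⟨s + 1, Set.self_mem_Ici, rfl⟩) (le_sInf ?_)
  rintro b ⟨r, hr, rfl⟩
  rw [Set.mem_Ici] at hr
  exact EReal.coe_le_coe_iff.mpr hr

end T34aux

/-- `Υ²_{T(3,4),2/3}(s) = −2s` for all `s ∈ [0,2]`. -/
theorem upsilon2_T34 :
    ∀ s ∈ Set.Icc (0 : ℝ) 2, T34.Upsilon2 (2 / 3) s = ((-2 * s : ℝ) : EReal) := by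
  intro s _
  rw [PreComplex.Upsilon2, T34aux.gamma2_eq, T34aux.gamma_23]
  rw [← EReal.coe_sub]
  have h1 : ((s + 1) - 1 : ℝ) = s := by ring
  rw [h1]
  have h2 : ((-2 * s : ℝ) : EReal) = ((-2 : ℝ) : EReal) * ((s : ℝ) : EReal) := by
    rw [← EReal.coe_mul]
  rw [h2]
  congr 1
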